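/- With notation as above (F non-archimedean local field, residue field 𝔽_q of odd characteristic, ε a unit reducing to a non-square), the conjugate g A g^{-1} (with g = diag(x,y^{-1},y,x^{-1})·unipotent(z) as above, x,y ∈ 𝒪_F^×, z ∈ 𝒪_F) lies in the set of matrices X with (4,1)-entry in ε + 𝔪 and (2,3)-entry in ϖ^{-1}ε + 𝒪_F (and the remaining congruence conditions of the support of f) if and only if the reductions satisfy z̄ = −ε̄ x̄²/2 and (ε̄²/4) x̄⁴ + 1 = ε̄ ȳ². -/

import Mathlib

open Matrix

private lemma wz_le_iff_lt_one (a : WithZero (Multiplicative ℤ)) :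
    a ≤ ((Multiplicative.ofAdd (-1 : ℤ) : Multiplicative ℤ) : WithZero (Multiplicative ℤ)) ↔
      a < 1 := by
  rcases eq_or_ne a 0 with rfl | ha
  · simp [zero_lt_one, zero_le']
  · obtain ⟨m, rfl⟩ := WithZero.ne_zero_iff_exists.mp ha
    rw [WithZero.coe_le_coe, ← WithZero.coe_one, WithZero.coe_lt_coe,
      ← Multiplicative.toAdd_le, ← Multiplicative.toAdd_lt]
    simp only [toAdd_ofAdd, toAdd_one]
    omega

private lemma wz_inv_mul_le_one (a b : WithZero (Multiplicative ℤ)) (hb : b ≠ 0) :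
    b⁻¹ * a ≤ 1 ↔ a ≤ b := by
  constructor
  · intro h
    have := mul_le_mul_right h b
    rwa [mul_one, ← mul_assoc, mul_inv_cancel₀ hb, one_mul] at this
  · intro h
    have := mul_le_mul_right h b⁻¹
    rwa [inv_mul_cancel₀ hb] at this

private theorem val_two_eq_one' {F : Type*} [Field F] [Valued F (WithZero (Multiplicative ℤ))]
    (hqodd : Odd (Nat.card (IsLocalRing.ResidueField
      (Valued.v : Valuation F (WithZero (Multiplicative ℤ))).valuationSubring))) :
    Valued.v (2 : F) = 1 := by
  set v : Valuation F (WithZero (Multiplicative ℤ)) := Valued.v with hv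
  have h2le : v (2 : F) ≤ 1 := by
    have h := v.map_add (1 : F) 1
    simp only [v.map_one, sup_idem] at h
    calc v (2 : F) = v (1 + 1 : F) := by norm_num
      _ ≤ 1 := h
  rcases lt_or_eq_of_le h2le with h2 | h2
  swap
  · exact h2
  · exfalso
    set O := v.valuationSubring with hO
    have hnu : ¬ IsUnit (2 : O) := by
      rintro ⟨u, hu⟩
      have h1 : ((u.val : O) : F) * ((u.inv : O) : F) = 1 := by
        exact_mod_cast congrArg (Subtype.val) u.val_inv
      have hval : v ((u.val : O) : F) = v (2 : F) := by rw [hu]; norm_cast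
      have : v ((u.val : O) : F) * v ((u.inv : O) : F) = 1 := by
        rw [← v.map_mul, h1, v.map_one]
      have hle : v ((u.inv : O) : F) ≤ 1 := u.inv.2
      have : (1 : WithZero (Multiplicative ℤ)) < 1 := by
        calc (1 : WithZero (Multiplicative ℤ)) = v ((u.val : O) : F) * v ((u.inv : O) : F) :=
              this.symm
          _ ≤ v ((u.val : O) : F) * 1 := mul_le_mul_right hle _
          _ = v (2 : F) := by rw [mul_one, hval]
          _ < 1 := h2
      exact lt_irrefl _ this
    have hres : IsLocalRing.residue O (2 : O) = 0 := by
      rw [IsLocalRing.residue_eq_zero_iff]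
      exact hnu
    set R := IsLocalRing.ResidueField O
    have h2R : (2 : R) = 0 := by
      have : IsLocalRing.residue O (2 : O) = (2 : R) := by push_cast [map_ofNat]; rfl
      rwa [this] at hres
    have hord : addOrderOf (1 : R) = 2 := by
      haveI : Fact (Nat.Prime 2) := ⟨Nat.prime_two⟩
      apply addOrderOf_eq_prime
      · rw [two_nsmul, ← two_mul, mul_one, h2R]
      · exact one_ne_zero
    have hdvd : (2 : ℕ) ∣ Nat.card R := by
      rw [← hord]; exact addOrderOf_dvd_natCard (1 : R)
    rw [Nat.odd_iff] at hqodd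
    omega


/-- The support of the test function `f`: matrices `X ∈ 𝔰𝔭₄(F)` with
`X₁₃, X₁₄, X₂₄ ∈ 𝔪⁻¹`, `X₂₃ ∈ ϖ⁻¹ε + 𝒪_F`, `X₄₁ ∈ ε + 𝔪`, and all other entries
in `𝒪_F`. -/
def inSupp {F : Type*} [Field F] [Valued F (WithZero (Multiplicative ℤ))]
    (ϖ ε : F) (X : Matrix (Fin 4) (Fin 4) F) : Prop :=
  Valued.v (X 0 0) ≤ 1 ∧ Valued.v (X 0 1) ≤ 1 ∧
    Valued.v (X 0 2) * Valued.v ϖ ≤ 1 ∧ Valued.v (X 0 3) * Valued.v ϖ ≤ 1 ∧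
  Valued.v (X 1 0) ≤ 1 ∧ Valued.v (X 1 1) ≤ 1 ∧
    Valued.v (X 1 2 - ϖ⁻¹ * ε) ≤ 1 ∧ Valued.v (X 1 3) * Valued.v ϖ ≤ 1 ∧
  Valued.v (X 2 0) ≤ 1 ∧ Valued.v (X 2 1) ≤ 1 ∧
    Valued.v (X 2 2) ≤ 1 ∧ Valued.v (X 2 3) ≤ 1 ∧
  Valued.v (X 3 0 - ε) < 1 ∧ Valued.v (X 3 1) ≤ 1 ∧
    Valued.v (X 3 2) ≤ 1 ∧ Valued.v (X 3 3) ≤ 1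

set_option maxHeartbeats 1000000 in
/-- With `F` a non-archimedean local field with residue field of odd
cardinality, `ε` a unit whose reduction is a non-square, `ϖ` a uniformizer, `A` as in the
paper and `g = diag(x, y⁻¹, y, x⁻¹)·unipotent(z)` with `x, y ∈ 𝒪_F^×`, `z ∈ 𝒪_F`: the
conjugate `g A g⁻¹` lies in the support of `f` (in particular its `(4,1)`-entry is in
`ε + 𝔪` and its `(2,3)`-entry is in `ϖ⁻¹ε + 𝒪_F`) if and only if the reductions satisfy
`z̄ = −ε̄x̄²/2` and `(ε̄²/4)x̄⁴ + 1 = ε̄ȳ²`. -/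
theorem stmt12 {F : Type*} [Field F] [Valued F (WithZero (Multiplicative ℤ))]
    (hqodd : Odd (Nat.card (IsLocalRing.ResidueField
      (Valued.v : Valuation F (WithZero (Multiplicative ℤ))).valuationSubring)))
    (ϖ : F) (hϖ : Valued.v ϖ =
      ((Multiplicative.ofAdd (-1 : ℤ) : Multiplicative ℤ) : WithZero (Multiplicative ℤ)))
    (ε : F) (hεu : Valued.v ε = 1)
    (hεns : ∀ t : F, Valued.v t ≤ 1 → ¬ Valued.v (ε - t ^ 2) < 1)
    (x y z : F) (hx : Valued.v x = 1) (hy : Valued.v y = 1) (hz : Valued.v z ≤ 1) :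
    let A : Matrix (Fin 4) (Fin 4) F :=
      !![0, 0, 0, ϖ⁻¹; 0, 0, ϖ⁻¹, 0; 1, 0, 0, 0; 0, 1, 0, 0]
    let g : Matrix (Fin 4) (Fin 4) F :=
      Matrix.diagonal ![x, y⁻¹, y, x⁻¹] *
        !![1, 0, 0, 0; z, 1, 0, 0; 0, 0, 1, 0; 0, 0, -z, 1]
    inSupp ϖ ε (g * A * g⁻¹) ↔
      ((Valued.v : Valuation F (WithZero (Multiplicative ℤ))) (z + ε * x ^ 2 / 2) < 1 ∧
        (Valued.v : Valuation F (WithZero (Multiplicative ℤ)))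
          (ε * y ^ 2 - (ε ^ 2 / 4 * x ^ 4 + 1)) < 1) := by
  intro A g
  set v : Valuation F (WithZero (Multiplicative ℤ)) := Valued.v with hvdef
  have hv2 : v (2 : F) = 1 := val_two_eq_one' hqodd
  have hx0 : x ≠ 0 := v.ne_zero_iff.mp (by rw [hx]; exact one_ne_zero)
  have hy0 : y ≠ 0 := v.ne_zero_iff.mp (by rw [hy]; exact one_ne_zero)
  have h20 : (2 : F) ≠ 0 := v.ne_zero_iff.mp (by rw [hv2]; exact one_ne_zero)
  have hvϖ0 : v ϖ ≠ 0 := by rw [hϖ]; exact WithZero.coe_ne_zero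
  have hϖ0 : ϖ ≠ 0 := v.ne_zero_iff.mp hvϖ0
  have hB : g * A * g⁻¹ =
      !![0, 0, ϖ⁻¹ * (x * z / y), ϖ⁻¹ * x ^ 2;
         0, 0, ϖ⁻¹ * ((1 + z ^ 2) / y ^ 2), ϖ⁻¹ * (x * z / y);
         y / x, 0, 0, 0;
         -(2 * z) / x ^ 2, y / x, 0, 0] := by
    have hg : g = !![x, 0, 0, 0; z * y⁻¹, y⁻¹, 0, 0; 0, 0, y, 0; 0, 0, -(z * x⁻¹), x⁻¹] := by
      ext i j
      fin_cases i <;> fin_cases j <;>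
        simp [g, Matrix.mul_apply, Fin.sum_univ_four, Matrix.diagonal, Matrix.vecHead,
          Matrix.vecTail, mul_comm]
    have hinv : g⁻¹ = !![x⁻¹, 0, 0, 0; -(z * x⁻¹), y, 0, 0; 0, 0, y⁻¹, 0; 0, 0, z * y⁻¹, x] := by
      apply Matrix.inv_eq_right_inv
      rw [hg]
      ext i j
      fin_cases i <;> fin_cases j <;>
        simp [Matrix.mul_apply, Fin.sum_univ_four, Matrix.vecHead, Matrix.vecTail] <;>
        field_simp <;> ring
    rw [hinv, hg]
    ext i j
    fin_cases i <;> fin_cases j <;>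
      simp [A, Matrix.mul_apply, Fin.sum_univ_four, Matrix.vecHead, Matrix.vecTail] <;>
      field_simp <;> ring
  rw [hB]
  unfold inSupp
  simp only [Matrix.cons_val', Matrix.cons_val_zero, Matrix.cons_val_one, Matrix.cons_val_two,
    Matrix.cons_val_three, Matrix.head_cons, Matrix.vecHead, Matrix.vecTail, Matrix.empty_val',
    Matrix.cons_val_fin_one, Matrix.head_fin_const, Matrix.of_apply, Function.comp_apply,
    Matrix.cons_val_succ,
    ← hvdef]
  have h40 : (4 : F) ≠ 0 := by
    intro h
    apply h20
    have h4 : (4 : F) = 2 * 2 := by norm_num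
    rcases mul_eq_zero.mp (h4 ▸ h) with h' | h' <;> exact h'
  have triv0 : v (0 : F) ≤ 1 := by rw [v.map_zero]; exact zero_le'
  have trivyx : v (y / x) ≤ 1 := by rw [v.map_div, hy, hx]; norm_num
  have e02 : v (ϖ⁻¹ * (x * z / y)) * v ϖ = v z := by
    rw [v.map_mul, v.map_inv, v.map_div, v.map_mul, hx, hy, one_mul, div_one, mul_comm,
      ← mul_assoc, mul_inv_cancel₀ hvϖ0, one_mul]
  have e03 : v (ϖ⁻¹ * x ^ 2) * v ϖ = 1 := by
    rw [v.map_mul, v.map_inv, v.map_pow, hx, one_pow, mul_one, inv_mul_cancel₀ hvϖ0]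
  have key13 : v (-(2 * z) / x ^ 2 - ε) = v (z + ε * x ^ 2 / 2) := by
    have h1 : -(2 * z) / x ^ 2 - ε = (z + ε * x ^ 2 / 2) * (-2 / x ^ 2) := by
      field_simp
      ring
    have h2 : v (-2 / x ^ 2 : F) = 1 := by
      rw [v.map_div, v.map_neg, hv2, v.map_pow, hx, one_pow, div_one]
    rw [h1, v.map_mul, h2, mul_one]
  have key7 : v (ϖ⁻¹ * ((1 + z ^ 2) / y ^ 2) - ϖ⁻¹ * ε) ≤ 1 ↔
      v (1 + z ^ 2 - ε * y ^ 2) < 1 := by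
    have h1 : ϖ⁻¹ * ((1 + z ^ 2) / y ^ 2) - ϖ⁻¹ * ε =
        ϖ⁻¹ * ((1 + z ^ 2 - ε * y ^ 2) / y ^ 2) := by
      field_simp
    rw [h1, v.map_mul, v.map_inv, v.map_div, v.map_pow, hy, one_pow, div_one,
      wz_inv_mul_le_one _ _ hvϖ0, hϖ, wz_le_iff_lt_one]
  have bridge : v (z + ε * x ^ 2 / 2) < 1 →
      (v (1 + z ^ 2 - ε * y ^ 2) < 1 ↔ v (ε * y ^ 2 - (ε ^ 2 / 4 * x ^ 4 + 1)) < 1) := by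
    intro hc
    have hfac : v (z ^ 2 - ε ^ 2 / 4 * x ^ 4) < 1 := by
      have h1 : z ^ 2 - ε ^ 2 / 4 * x ^ 4 = (z + ε * x ^ 2 / 2) * (z - ε * x ^ 2 / 2) := by
        field_simp
        try ring_nf
        try rw [mul_assoc, inv_mul_cancel₀ h40, mul_one]
      have h2 : v (z - ε * x ^ 2 / 2) ≤ 1 := by
        apply v.map_sub_le hz
        rw [show ε * x ^ 2 / 2 = ε * x ^ 2 / 2 from rfl, v.map_div, v.map_mul, v.map_pow,
          hεu, hx, hv2, one_pow, one_mul, div_one]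
      calc v (z ^ 2 - ε ^ 2 / 4 * x ^ 4) = v (z + ε * x ^ 2 / 2) * v (z - ε * x ^ 2 / 2) := by
            rw [h1, v.map_mul]
        _ ≤ v (z + ε * x ^ 2 / 2) * 1 := mul_le_mul_right h2 _
        _ = v (z + ε * x ^ 2 / 2) := mul_one _
        _ < 1 := hc
    constructor
    · intro h
      have hiden : ε * y ^ 2 - (ε ^ 2 / 4 * x ^ 4 + 1) =
          -(1 + z ^ 2 - ε * y ^ 2) + (z ^ 2 - ε ^ 2 / 4 * x ^ 4) := by ring
      rw [hiden]
      calc v _ ≤ max (v (-(1 + z ^ 2 - ε * y ^ 2))) (v (z ^ 2 - ε ^ 2 / 4 * x ^ 4)) :=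
            v.map_add _ _
        _ < 1 := max_lt (by rwa [v.map_neg]) hfac
    · intro h
      have hiden : 1 + z ^ 2 - ε * y ^ 2 =
          -(ε * y ^ 2 - (ε ^ 2 / 4 * x ^ 4 + 1)) + (z ^ 2 - ε ^ 2 / 4 * x ^ 4) := by ring
      rw [hiden]
      calc v _ ≤ max (v (-(ε * y ^ 2 - (ε ^ 2 / 4 * x ^ 4 + 1))))
            (v (z ^ 2 - ε ^ 2 / 4 * x ^ 4)) := v.map_add _ _
        _ < 1 := max_lt (by rwa [v.map_neg]) hfac
  constructor
  · rintro ⟨-, -, -, -, -, -, h7, -, -, -, -, -, h13, -, -, -⟩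
    rw [key13] at h13
    exact ⟨h13, (bridge h13).mp (key7.mp h7)⟩
  · rintro ⟨h1, h2⟩
    refine ⟨triv0, triv0, ?_, ?_, triv0, triv0, ?_, ?_, trivyx, triv0, triv0, triv0, ?_,
      trivyx, triv0, triv0⟩
    · rw [e02]; exact hz
    · rw [e03]
    · exact key7.mpr ((bridge h1).mpr h2)
    · rw [e02]; exact hz
    · rw [key13]; exact h1
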